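/- For a fixed non-increasing, non-negative sequence λ ∈ ℝ^p that is not identically zero, the function J_λ(b) = Σ_{i=1}^p λ_i |b|_{(i)} is a norm on ℝ^p: it is absolutely homogeneous, vanishes only at 0, and satisfies the triangle inequality. -/

import Mathlib

/-- The `i`-th largest absolute value of the coordinates of `b : Fin p → ℝ`. -/
noncomputable def sortedAbs {p : ℕ} (b : Fin p → ℝ) (i : Fin p) : ℝ :=
  |b (Tuple.sort (fun j => |b j|) i.rev)|

/-- The sorted-ℓ¹ norm `J_λ(b) = ∑ λᵢ |b|₍ᵢ₎`. -/
noncomputable def Jlam {p : ℕ} (lam : Fin p → ℝ) (b : Fin p → ℝ) : ℝ :=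
  ∑ i, lam i * sortedAbs b i

lemma sortedAbs_antitone {p : ℕ} (b : Fin p → ℝ) : Antitone (sortedAbs b) := by
  intro i j hij
  exact Tuple.monotone_sort (fun j => |b j|) (Fin.rev_le_rev.mpr hij)

lemma sortedAbs_nonneg {p : ℕ} (b : Fin p → ℝ) (i : Fin p) : 0 ≤ sortedAbs b i :=
  abs_nonneg _

lemma abs_le_sortedAbs_zero {p : ℕ} (hp : 0 < p) (b : Fin p → ℝ) (j : Fin p) :
    |b j| ≤ sortedAbs b ⟨0, hp⟩ := by
  set f : Fin p → ℝ := fun j => |b j| with hf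
  have h := Tuple.monotone_sort f
  have hle : (Tuple.sort f).symm j ≤ (⟨0, hp⟩ : Fin p).rev := by
    have h1 : (((⟨0, hp⟩ : Fin p).rev : Fin p) : ℕ) = p - 1 := by simp [Fin.rev]
    have h2 : (((Tuple.sort f).symm j : Fin p) : ℕ) < p := ((Tuple.sort f).symm j).isLt
    rw [Fin.le_def, h1]; omega
  have h3 := h hle
  simpa [f, sortedAbs] using h3

/-- Key rearrangement fact: any permuted pairing is at most `Jlam`. -/
lemma sum_perm_le_Jlam {p : ℕ} (lam : Fin p → ℝ)
    (hmono : ∀ i j : Fin p, i ≤ j → lam j ≤ lam i)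
    (b : Fin p → ℝ) (σ : Equiv.Perm (Fin p)) :
    ∑ i, lam i * |b (σ i)| ≤ Jlam lam b := by
  have hmv : Monovary lam (sortedAbs b) := by
    intro i j hij
    rcases le_or_gt i j with h | h
    · exact absurd (sortedAbs_antitone b h) (not_le.mpr hij)
    · exact hmono j i h.le
  set f : Fin p → ℝ := fun j => |b j| with hf
  set ρ : Equiv.Perm (Fin p) := (Fin.revPerm).trans (Tuple.sort f) with hρ
  have hs : ∀ i, sortedAbs b i = f (ρ i) := by
    intro i; simp [sortedAbs, hρ, f, Fin.revPerm]
  set π : Equiv.Perm (Fin p) := σ.trans ρ.symm with hπ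
  have h1 : ∀ i, |b (σ i)| = sortedAbs b (π i) := by
    intro i; rw [hs]; simp [hπ, f]
  calc ∑ i, lam i * |b (σ i)| = ∑ i, lam i • sortedAbs b (π i) := by
        simp only [h1, smul_eq_mul]
    _ ≤ ∑ i, lam i • sortedAbs b i := hmv.sum_smul_comp_perm_le_sum_smul (σ := π)
    _ = Jlam lam b := by simp [Jlam, smul_eq_mul]

lemma sortedAbs_smul {p : ℕ} (a : ℝ) (b : Fin p → ℝ) (i : Fin p) :
    sortedAbs (a • b) i = |a| * sortedAbs b i := by
  set f : Fin p → ℝ := fun j => |b j| with hf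
  set g : Fin p → ℝ := fun j => |a| * f j with hg
  have habs : (fun j => |(a • b) j|) = g := by
    funext j; simp [g, f, abs_mul]
  have hmonog : Monotone (g ∘ Tuple.sort f) := by
    intro i j h
    exact mul_le_mul_of_nonneg_left (Tuple.monotone_sort f h) (abs_nonneg a)
  have key : g ∘ Tuple.sort f = g ∘ Tuple.sort g :=
    (Tuple.comp_sort_eq_comp_iff_monotone).mpr hmonog
  have h1 : sortedAbs (a • b) i = (g ∘ Tuple.sort g) i.rev := by
    simp only [sortedAbs, habs]
    simp [g, f, abs_mul]
  rw [h1, ← key]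
  simp [g, f, sortedAbs]

theorem Jlam_is_norm {p : ℕ} (hp : 0 < p) (lam : Fin p → ℝ)
    (hmono : ∀ i j : Fin p, i ≤ j → lam j ≤ lam i)
    (hnonneg : ∀ i, 0 ≤ lam i) (hpos : 0 < lam ⟨0, hp⟩) :
    (∀ (a : ℝ) (b : Fin p → ℝ), Jlam lam (a • b) = |a| * Jlam lam b) ∧
    (∀ b : Fin p → ℝ, Jlam lam b = 0 ↔ b = 0) ∧
    (∀ x y : Fin p → ℝ, Jlam lam (x + y) ≤ Jlam lam x + Jlam lam y) := by
  refine ⟨?_, ?_, ?_⟩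
  · intro a b
    simp only [Jlam, sortedAbs_smul, Finset.mul_sum]
    exact Finset.sum_congr rfl fun i _ => by ring
  · intro b
    constructor
    · intro h
      by_contra hb
      obtain ⟨j, hj⟩ := Function.ne_iff.mp hb
      have hbj : (0 : ℝ) < |b j| := abs_pos.mpr hj
      have hs0 : 0 < sortedAbs b ⟨0, hp⟩ :=
        lt_of_lt_of_le hbj (abs_le_sortedAbs_zero hp b j)
      have hterm : 0 < lam ⟨0, hp⟩ * sortedAbs b ⟨0, hp⟩ := mul_pos hpos hs0
      have hJ : 0 < Jlam lam b := by
        unfold Jlam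
        refine lt_of_lt_of_le hterm (Finset.single_le_sum (f := fun i => lam i * sortedAbs b i) (fun i _ => ?_) (Finset.mem_univ _))
        exact mul_nonneg (hnonneg i) (sortedAbs_nonneg b i)
      linarith
    · intro h
      subst h
      simp [Jlam, sortedAbs]
  · intro x y
    set h : Fin p → ℝ := fun j => |(x + y) j| with hh
    set ρ : Equiv.Perm (Fin p) := (Fin.revPerm).trans (Tuple.sort h) with hρ
    have hs : ∀ i, sortedAbs (x + y) i = |(x + y) (ρ i)| := by
      intro i; simp [sortedAbs, hρ, h, Fin.revPerm]
    have step1 : Jlam lam (x + y) ≤ ∑ i, lam i * (|x (ρ i)| + |y (ρ i)|) := by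
      unfold Jlam
      refine Finset.sum_le_sum fun i _ => ?_
      rw [hs]
      have : |(x + y) (ρ i)| ≤ |x (ρ i)| + |y (ρ i)| := by
        simpa using abs_add_le (x (ρ i)) (y (ρ i))
      exact mul_le_mul_of_nonneg_left this (hnonneg i)
    have step2 : ∑ i, lam i * (|x (ρ i)| + |y (ρ i)|)
        = (∑ i, lam i * |x (ρ i)|) + ∑ i, lam i * |y (ρ i)| := by
      rw [← Finset.sum_add_distrib]
      exact Finset.sum_congr rfl fun i _ => by ring
    calc Jlam lam (x + y) ≤ (∑ i, lam i * |x (ρ i)|) + ∑ i, lam i * |y (ρ i)| := by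
          rw [← step2]; exact step1
      _ ≤ Jlam lam x + Jlam lam y :=
          add_le_add (sum_perm_le_Jlam lam hmono x ρ) (sum_perm_le_Jlam lam hmono y ρ)
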